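/- Dominance implies greediness is optimal: if 2s₂ ≤ s₁, then for every tie-breaking setting X and every heap size h ≥ s₁, the greedy move s₁ attains the maximum in the recursion, i.e. o¹_X(h) = s₁ + o²_{d(X)}(h − s₁). -/
import Mathlib


inductive TB : Type
  | FvF | FvA | AvF | AvA
deriving DecidableEq

def TB.dual : TB → TB
  | .FvF => .FvF
  | .FvA => .AvF
  | .AvF => .FvA
  | .AvA => .AvA

/-- `true` iff the current mover is friendly (first letter F). -/
def TB.friendly : TB → Bool
  | .FvF => true
  | .FvA => true
  | .AvF => false
  | .AvA => false

/-- PSPE outcome pair `(o¹_X h, o²_X h)` for subtraction set `S`. -/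
def outc (S : Finset ℕ) (h : ℕ) (X : TB) : ℕ × ℕ :=
  let M := S.filter fun s => 0 < s ∧ s ≤ h
  if hM : M.Nonempty then
    have hA : M.attach.Nonempty := (Finset.attach_nonempty_iff).mpr hM
    let f : {s // s ∈ M} → ℕ := fun s =>
      have hs : h - s.1 < h := by
        have h1 := (Finset.mem_filter.mp s.2).2
        omega
      s.1 + (outc S (h - s.1) X.dual).2
    let o1 := M.attach.sup f
    let Mstar := M.attach.filter fun s => f s = o1
    have hMs : Mstar.Nonempty := by
      obtain ⟨b, hb, hbe⟩ := Finset.exists_mem_eq_sup M.attach hA f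
      exact ⟨b, Finset.mem_filter.mpr ⟨hb, hbe.symm⟩⟩
    let g : {s // s ∈ M} → ℕ := fun s =>
      have hs : h - s.1 < h := by
        have h1 := (Finset.mem_filter.mp s.2).2
        omega
      (outc S (h - s.1) X.dual).1
    if X.friendly then (o1, Mstar.sup g) else (o1, Mstar.inf' hMs g)
  else (0, 0)
termination_by h

/-- First player's PSPE utility. -/
def o1 (S : Finset ℕ) (X : TB) (h : ℕ) : ℕ := (outc S h X).1

/-- Second player's PSPE utility. -/
def o2 (S : Finset ℕ) (X : TB) (h : ℕ) : ℕ := (outc S h X).2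


def pr (s₂ s₁ h : ℕ) : ℕ × ℕ :=
  if hb : 0 < s₁ ∧ s₁ ≤ h then
    (s₁ + (pr s₂ s₁ (h - s₁)).2, (pr s₂ s₁ (h - s₁)).1)
  else if ha : 0 < s₂ ∧ s₂ ≤ h then
    (s₂ + (pr s₂ s₁ (h - s₂)).2, (pr s₂ s₁ (h - s₂)).1)
  else (0, 0)
termination_by h
decreasing_by all_goals omega

lemma pr_low {s₂ s₁ h : ℕ} (h1 : h < s₂) (h2 : h < s₁) : pr s₂ s₁ h = (0, 0) := by
  rw [pr]; rw [dif_neg (by omega), dif_neg (by omega)]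

lemma pr_mid {s₂ s₁ h : ℕ} (hpos : 0 < s₂) (h1 : s₂ ≤ h) (h2 : h < s₁) :
    pr s₂ s₁ h = (s₂ + (pr s₂ s₁ (h - s₂)).2, (pr s₂ s₁ (h - s₂)).1) := by
  rw [pr]; rw [dif_neg (by omega), dif_pos (by omega)]

lemma pr_hi {s₂ s₁ h : ℕ} (hpos : 0 < s₁) (h2 : s₁ ≤ h) :
    pr s₂ s₁ h = (s₁ + (pr s₂ s₁ (h - s₁)).2, (pr s₂ s₁ (h - s₁)).1) := by
  rw [pr]; rw [dif_pos (by omega)]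

section
variable {s₂ s₁ : ℕ}

lemma q_low (h1 : h < s₂) (h2 : h < s₁) : (pr s₂ s₁ h).1 = 0 := by rw [pr_low h1 h2]
lemma r_low (h1 : h < s₂) (h2 : h < s₁) : (pr s₂ s₁ h).2 = 0 := by rw [pr_low h1 h2]
lemma q_mid (hpos : 0 < s₂) (h1 : s₂ ≤ h) (h2 : h < s₁) :
    (pr s₂ s₁ h).1 = s₂ + (pr s₂ s₁ (h - s₂)).2 := by rw [pr_mid hpos h1 h2]
lemma r_mid (hpos : 0 < s₂) (h1 : s₂ ≤ h) (h2 : h < s₁) :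
    (pr s₂ s₁ h).2 = (pr s₂ s₁ (h - s₂)).1 := by rw [pr_mid hpos h1 h2]
lemma q_hi (hpos : 0 < s₁) (h2 : s₁ ≤ h) :
    (pr s₂ s₁ h).1 = s₁ + (pr s₂ s₁ (h - s₁)).2 := by rw [pr_hi hpos h2]
lemma r_hi (hpos : 0 < s₁) (h2 : s₁ ≤ h) :
    (pr s₂ s₁ h).2 = (pr s₂ s₁ (h - s₁)).1 := by rw [pr_hi hpos h2]

lemma pr_sum (hpos : 0 < s₂) (hlt : s₂ < s₁) : ∀ h, (pr s₂ s₁ h).1 + (pr s₂ s₁ h).2 ≤ h := by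
  intro h
  induction h using Nat.strong_induction_on with
  | _ h ih =>
    by_cases hb : s₁ ≤ h
    · have h1 := q_hi (s₂ := s₂) (by omega) hb
      have h2 := r_hi (s₂ := s₂) (by omega) hb
      have := ih (h - s₁) (by omega); omega
    · by_cases ha : s₂ ≤ h
      · have h1 := q_mid (s₁ := s₁) hpos ha (by omega)
        have h2 := r_mid (s₁ := s₁) hpos ha (by omega)
        have := ih (h - s₂) (by omega); omega
      · have h1 := q_low (s₂ := s₂) (s₁ := s₁) (h := h) (by omega) (by omega)
        have h2 := r_low (s₂ := s₂) (s₁ := s₁) (h := h) (by omega) (by omega)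
        omega

lemma pr_ge {h : ℕ} (hpos : 0 < s₂) (hlt : s₂ < s₁) (hs : s₂ ≤ h) :
    s₂ ≤ (pr s₂ s₁ h).1 := by
  by_cases hb : s₁ ≤ h
  · have := q_hi (s₂ := s₂) (by omega) hb; omega
  · have := q_mid (s₁ := s₁) hpos hs (by omega); omega

lemma pr_key (hpos : 0 < s₂) (hlt : s₂ < s₁) (hdom : 2 * s₂ ≤ s₁) :
    ∀ m, (pr s₂ s₁ (m + (s₁ - s₂))).2 ≤ (pr s₂ s₁ m).2 + (s₁ - s₂) ∧
      ((pr s₂ s₁ (m + (s₁ - s₂))).2 = (pr s₂ s₁ m).2 + (s₁ - s₂) →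
        (pr s₂ s₁ (m + (s₁ - s₂))).1 = (pr s₂ s₁ m).1) := by
  intro m
  induction m using Nat.strong_induction_on with
  | _ m ih =>
    by_cases c1 : m < s₂
    · -- m < s₂ : strict
      have hA : (pr s₂ s₁ (m + (s₁ - s₂))).2 = (pr s₂ s₁ (m + (s₁ - s₂) - s₂)).1 :=
        r_mid hpos (by omega) (by omega)
      have hB := r_low (s₂ := s₂) (s₁ := s₁) (h := m) c1 (by omega)
      have hC := pr_sum hpos hlt (m + (s₁ - s₂) - s₂)
      omega
    · by_cases c2 : m < s₁
      · -- s₂ ≤ m < s₁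
        have hA : (pr s₂ s₁ (m + (s₁ - s₂))).2 = (pr s₂ s₁ (m - s₂)).1 := by
          rw [r_hi (by omega) (by omega)]; congr 2; omega
        have hB : (pr s₂ s₁ m).2 = (pr s₂ s₁ (m - s₂)).1 := r_mid hpos (by omega) c2
        omega
      · -- m ≥ s₁
        have hA : (pr s₂ s₁ (m + (s₁ - s₂))).2 = (pr s₂ s₁ (m - s₂)).1 := by
          rw [r_hi (by omega) (by omega)]; congr 2; omega
        have hA1 : (pr s₂ s₁ (m + (s₁ - s₂))).1 = s₁ + (pr s₂ s₁ (m - s₂)).2 := by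
          rw [q_hi (by omega) (by omega)]; congr 3; omega
        have hB : (pr s₂ s₁ m).2 = (pr s₂ s₁ (m - s₁)).1 := r_hi (by omega) (by omega)
        have hB1 : (pr s₂ s₁ m).1 = s₁ + (pr s₂ s₁ (m - s₁)).2 := q_hi (by omega) (by omega)
        by_cases c3 : m < s₁ + s₂
        · have hC : (pr s₂ s₁ (m - s₂)).1 = s₂ + (pr s₂ s₁ (m - 2 * s₂)).2 := by
            rw [q_mid hpos (by omega) (by omega)]; congr 3; omega
          have hC2 : (pr s₂ s₁ (m - s₂)).2 = (pr s₂ s₁ (m - 2 * s₂)).1 := by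
            rw [r_mid hpos (by omega) (by omega)]; congr 2; omega
          have hD := q_low (s₂ := s₂) (s₁ := s₁) (h := m - s₁) (by omega) (by omega)
          have hD2 := r_low (s₂ := s₂) (s₁ := s₁) (h := m - s₁) (by omega) (by omega)
          by_cases c4 : m - 2 * s₂ < s₂
          · have hE := q_low (s₂ := s₂) (s₁ := s₁) (h := m - 2 * s₂) c4 (by omega)
            have hE2 := r_low (s₂ := s₂) (s₁ := s₁) (h := m - 2 * s₂) c4 (by omega)
            omega
          · have hE := pr_sum hpos hlt (m - 2 * s₂)
            have hF := pr_ge (s₁ := s₁) (h := m - 2 * s₂) hpos hlt (by omega)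
            omega
        · have hC : (pr s₂ s₁ (m - s₂)).1 = s₁ + (pr s₂ s₁ (m - s₁ - s₂)).2 := by
            rw [q_hi (by omega) (by omega)]; congr 3; omega
          have hC2 : (pr s₂ s₁ (m - s₂)).2 = (pr s₂ s₁ (m - s₁ - s₂)).1 := by
            rw [r_hi (by omega) (by omega)]; congr 2; omega
          by_cases c5 : m < 2 * s₁
          · have hD : (pr s₂ s₁ (m - s₁)).1 = s₂ + (pr s₂ s₁ (m - s₁ - s₂)).2 :=
              q_mid hpos (by omega) (by omega)
            have hD2 : (pr s₂ s₁ (m - s₁)).2 = (pr s₂ s₁ (m - s₁ - s₂)).1 :=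
              r_mid hpos (by omega) (by omega)
            omega
          · have hD : (pr s₂ s₁ (m - s₁)).1 = s₁ + (pr s₂ s₁ (m - 2 * s₁)).2 := by
              rw [q_hi (by omega) (by omega)]; congr 3; omega
            have hD2 : (pr s₂ s₁ (m - s₁)).2 = (pr s₂ s₁ (m - 2 * s₁)).1 := by
              rw [r_hi (by omega) (by omega)]; congr 2; omega
            have IH := ih (m - 2 * s₁) (by omega)
            rw [show m - 2 * s₁ + (s₁ - s₂) = m - s₁ - s₂ by omega] at IH
            obtain ⟨IH1, IH2⟩ := IH
            constructor
            · omega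
            · intro heq
              have := IH2 (by omega)
              omega

end
section
variable {s₂ s₁ : ℕ}

lemma outc_eq (hpos : 0 < s₂) (hlt : s₂ < s₁) (hdom : 2 * s₂ ≤ s₁) :
    ∀ h X, outc {s₂, s₁} h X = pr s₂ s₁ h := by
  intro h
  induction h using Nat.strong_induction_on with
  | _ h ih =>
    intro X
    by_cases hcase : s₂ ≤ h
    · have hM : (({s₂, s₁} : Finset ℕ).filter fun s => 0 < s ∧ s ≤ h).Nonempty :=
        ⟨s₂, Finset.mem_filter.mpr ⟨by simp, hpos, hcase⟩⟩
      rw [outc, dif_pos hM]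
      simp only []
      set M : Finset ℕ := ({s₂, s₁} : Finset ℕ).filter fun s => 0 < s ∧ s ≤ h with hMdef
      have hmem : ∀ a : {x // x ∈ M}, (a.1 = s₂ ∨ a.1 = s₁) ∧ 0 < a.1 ∧ a.1 ≤ h := by
        intro a
        have := a.2
        simp only [hMdef, Finset.mem_filter, Finset.mem_insert, Finset.mem_singleton] at this
        tauto
      have hFval : ∀ a : {x // x ∈ M},
          a.1 + (outc {s₂, s₁} (h - a.1) X.dual).2 = a.1 + (pr s₂ s₁ (h - a.1)).2 := by
        intro a
        have h1 := (hmem a).2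
        rw [ih (h - a.1) (by omega) X.dual]
      have hGval : ∀ a : {x // x ∈ M},
          (outc {s₂, s₁} (h - a.1) X.dual).1 = (pr s₂ s₁ (h - a.1)).1 := by
        intro a
        have h1 := (hmem a).2
        rw [ih (h - a.1) (by omega) X.dual]
      have hs2M : s₂ ∈ M := Finset.mem_filter.mpr ⟨by simp, hpos, hcase⟩
      by_cases hhi : s₁ ≤ h
      · -- high case
        have hs1M : s₁ ∈ M := Finset.mem_filter.mpr ⟨by simp, by omega, hhi⟩
        have hkey := pr_key hpos hlt hdom (h - s₁)
        rw [show h - s₁ + (s₁ - s₂) = h - s₂ by omega] at hkey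
        have hle : ∀ a : {x // x ∈ M},
            a.1 + (pr s₂ s₁ (h - a.1)).2 ≤ s₁ + (pr s₂ s₁ (h - s₁)).2 := by
          intro a
          rcases (hmem a).1 with e | e
          · rw [e]; have := hkey.1; omega
          · rw [e]
        have hsup : (M.attach.sup fun s => s.1 + (outc {s₂, s₁} (h - s.1) X.dual).2)
            = s₁ + (pr s₂ s₁ (h - s₁)).2 := by
          apply le_antisymm
          · exact Finset.sup_le fun a _ => le_trans (le_of_eq (hFval a)) (hle a)
          · refine le_trans (le_of_eq (hFval ⟨s₁, hs1M⟩).symm)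
              (Finset.le_sup (f := fun s : {x // x ∈ M} =>
                s.1 + (outc {s₂, s₁} (h - s.1) X.dual).2) (Finset.mem_attach _ ⟨s₁, hs1M⟩))
        have hs1star : (⟨s₁, hs1M⟩ : {x // x ∈ M}) ∈ M.attach.filter fun s =>
            s.1 + (outc {s₂, s₁} (h - s.1) X.dual).2
              = M.attach.sup fun s => s.1 + (outc {s₂, s₁} (h - s.1) X.dual).2 := by
          have heq : s₁ + (outc {s₂, s₁} (h - s₁) X.dual).2
              = M.attach.sup fun s => s.1 + (outc {s₂, s₁} (h - s.1) X.dual).2 := by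
            rw [hsup]; exact hFval ⟨s₁, hs1M⟩
          exact Finset.mem_filter.mpr ⟨Finset.mem_attach _ _, heq⟩
        have hgconst : ∀ a ∈ M.attach.filter fun s =>
            s.1 + (outc {s₂, s₁} (h - s.1) X.dual).2
              = M.attach.sup fun s => s.1 + (outc {s₂, s₁} (h - s.1) X.dual).2,
            (outc {s₂, s₁} (h - a.1) X.dual).1 = (pr s₂ s₁ (h - s₁)).1 := by
          intro a ha
          have hfa : a.1 + (outc {s₂, s₁} (h - a.1) X.dual).2
              = M.attach.sup fun s => s.1 + (outc {s₂, s₁} (h - s.1) X.dual).2 :=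
            (Finset.mem_filter.mp ha).2
          rw [hFval a, hsup] at hfa
          rw [hGval a]
          rcases (hmem a).1 with e | e
          · rw [e] at hfa ⊢
            exact hkey.2 (by omega)
          · rw [e]
        have hstar1 : (Finset.sup (M.attach.filter fun s =>
            s.1 + (outc {s₂, s₁} (h - s.1) X.dual).2
              = M.attach.sup fun s => s.1 + (outc {s₂, s₁} (h - s.1) X.dual).2)
            fun x => (outc {s₂, s₁} (h - x.1) X.dual).1) = (pr s₂ s₁ (h - s₁)).1 := by
          apply le_antisymm
          · exact Finset.sup_le fun a ha => le_of_eq (hgconst a ha)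
          · exact le_trans (le_of_eq (hGval ⟨s₁, hs1M⟩).symm)
              (Finset.le_sup (f := fun x : {x // x ∈ M} =>
                (outc {s₂, s₁} (h - x.1) X.dual).1) hs1star)
        have hstar2 : ∀ hb : (M.attach.filter fun s : {x // x ∈ M} =>
            s.1 + (outc {s₂, s₁} (h - s.1) X.dual).2
              = M.attach.sup fun s => s.1 + (outc {s₂, s₁} (h - s.1) X.dual).2).Nonempty,
            (Finset.inf' (M.attach.filter fun s =>
            s.1 + (outc {s₂, s₁} (h - s.1) X.dual).2
              = M.attach.sup fun s => s.1 + (outc {s₂, s₁} (h - s.1) X.dual).2) hb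
            fun x => (outc {s₂, s₁} (h - x.1) X.dual).1) = (pr s₂ s₁ (h - s₁)).1 := by
          intro hb
          apply le_antisymm
          · exact le_trans (Finset.inf'_le (fun x : {x // x ∈ M} =>
              (outc {s₂, s₁} (h - x.1) X.dual).1) hs1star) (le_of_eq (hGval ⟨s₁, hs1M⟩))
          · exact Finset.le_inf' _ _ fun a ha => le_of_eq (hgconst a ha).symm
        rw [pr_hi (by omega) hhi]
        split
        · exact Prod.ext hsup hstar1
        · exact Prod.ext hsup (hstar2 ⟨_, hs1star⟩)
      · -- mid case
        have honly : ∀ a : {x // x ∈ M}, a.1 = s₂ := by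
          intro a
          rcases (hmem a).1 with e | e
          · exact e
          · exact absurd ((hmem a).2.2) (by omega)
        have hle : ∀ a : {x // x ∈ M},
            a.1 + (pr s₂ s₁ (h - a.1)).2 ≤ s₂ + (pr s₂ s₁ (h - s₂)).2 := by
          intro a; rw [honly a]
        have hsup : (M.attach.sup fun s => s.1 + (outc {s₂, s₁} (h - s.1) X.dual).2)
            = s₂ + (pr s₂ s₁ (h - s₂)).2 := by
          apply le_antisymm
          · exact Finset.sup_le fun a _ => le_trans (le_of_eq (hFval a)) (hle a)
          · refine le_trans (le_of_eq (hFval ⟨s₂, hs2M⟩).symm)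
              (Finset.le_sup (f := fun s : {x // x ∈ M} =>
                s.1 + (outc {s₂, s₁} (h - s.1) X.dual).2) (Finset.mem_attach _ ⟨s₂, hs2M⟩))
        have hs2star : (⟨s₂, hs2M⟩ : {x // x ∈ M}) ∈ M.attach.filter fun s =>
            s.1 + (outc {s₂, s₁} (h - s.1) X.dual).2
              = M.attach.sup fun s => s.1 + (outc {s₂, s₁} (h - s.1) X.dual).2 := by
          have heq : s₂ + (outc {s₂, s₁} (h - s₂) X.dual).2
              = M.attach.sup fun s => s.1 + (outc {s₂, s₁} (h - s.1) X.dual).2 := by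
            rw [hsup]; exact hFval ⟨s₂, hs2M⟩
          exact Finset.mem_filter.mpr ⟨Finset.mem_attach _ _, heq⟩
        have hgconst : ∀ a ∈ M.attach.filter fun s =>
            s.1 + (outc {s₂, s₁} (h - s.1) X.dual).2
              = M.attach.sup fun s => s.1 + (outc {s₂, s₁} (h - s.1) X.dual).2,
            (outc {s₂, s₁} (h - a.1) X.dual).1 = (pr s₂ s₁ (h - s₂)).1 := by
          intro a _
          rw [hGval a, honly a]
        have hstar1 : (Finset.sup (M.attach.filter fun s =>
            s.1 + (outc {s₂, s₁} (h - s.1) X.dual).2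
              = M.attach.sup fun s => s.1 + (outc {s₂, s₁} (h - s.1) X.dual).2)
            fun x => (outc {s₂, s₁} (h - x.1) X.dual).1) = (pr s₂ s₁ (h - s₂)).1 := by
          apply le_antisymm
          · exact Finset.sup_le fun a ha => le_of_eq (hgconst a ha)
          · exact le_trans (le_of_eq (hGval ⟨s₂, hs2M⟩).symm)
              (Finset.le_sup (f := fun x : {x // x ∈ M} =>
                (outc {s₂, s₁} (h - x.1) X.dual).1) hs2star)
        have hstar2 : ∀ hb : (M.attach.filter fun s : {x // x ∈ M} =>
            s.1 + (outc {s₂, s₁} (h - s.1) X.dual).2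
              = M.attach.sup fun s => s.1 + (outc {s₂, s₁} (h - s.1) X.dual).2).Nonempty,
            (Finset.inf' (M.attach.filter fun s =>
            s.1 + (outc {s₂, s₁} (h - s.1) X.dual).2
              = M.attach.sup fun s => s.1 + (outc {s₂, s₁} (h - s.1) X.dual).2) hb
            fun x => (outc {s₂, s₁} (h - x.1) X.dual).1) = (pr s₂ s₁ (h - s₂)).1 := by
          intro hb
          apply le_antisymm
          · exact le_trans (Finset.inf'_le (fun x : {x // x ∈ M} =>
              (outc {s₂, s₁} (h - x.1) X.dual).1) hs2star) (le_of_eq (hGval ⟨s₂, hs2M⟩))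
          · exact Finset.le_inf' _ _ fun a ha => le_of_eq (hgconst a ha).symm
        rw [pr_mid hpos hcase (by omega)]
        split
        · exact Prod.ext hsup hstar1
        · exact Prod.ext hsup (hstar2 ⟨_, hs2star⟩)
    · have hM : ¬ (({s₂, s₁} : Finset ℕ).filter fun s => 0 < s ∧ s ≤ h).Nonempty := by
        rintro ⟨s, hs⟩
        rw [Finset.mem_filter] at hs
        simp only [Finset.mem_insert, Finset.mem_singleton] at hs
        omega
      rw [outc, dif_neg hM, pr_low (by omega) (by omega)]

end


theorem stmt2 (s₂ s₁ : ℕ) (hpos : 0 < s₂) (hlt : s₂ < s₁) (hdom : 2 * s₂ ≤ s₁)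
    (X : TB) (h : ℕ) (hh : s₁ ≤ h) :
    o1 {s₂, s₁} X h = s₁ + o2 {s₂, s₁} X.dual (h - s₁) := by
  unfold o1 o2
  rw [outc_eq hpos hlt hdom, outc_eq hpos hlt hdom, q_hi (by omega) hh]
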